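/- arXiv:2208.08718 — 3 statements merged into one kernel-verified Lean document; each statement's English description precedes it below -/
import Mathlib

section
/- Let G = (V,E) be a finite graph, w : V → ℕ node weights, k ∈ ℕ, and for each node v an antitone predicate P_v over assignments x : closed-neighborhood(v) → {0,…,k}, meaning: if P_v holds for x and x' is pointwise at most x, then P_v holds for x'. Suppose o : V → {0,…,k} is feasible (P_v holds at every v) and maximizes ∑_v w(v)·o(v). Then for every U ⊆ V and every g : U ∪ N²(U) → {0,…,k} with g ≡ 0 on N²(U), g ≡ 0 on rim(U), and P_v(g) holding for all v ∈ inner(U ∪ N²(U)) — in particular g respects feasibility at all nodes of U — we have ∑_{v ∈ U} w(v)·o(v) ≥ ∑_{v ∈ inner²(U)} w(v)·g(v). -/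
/-- `inner(U) = {u ∈ U | N(u) ⊆ U}` as a Finset. -/
def innF {V : Type*} [Fintype V] [DecidableEq V] (G : SimpleGraph V) [DecidableRel G.Adj]
    (U : Finset V) : Finset V :=
  U.filter fun u => ∀ x, G.Adj u x → x ∈ U

/-- `N²(U)`: the nodes outside `U` at distance at most 2 from a node of `U`. -/
def n2F {V : Type*} [Fintype V] [DecidableEq V] (G : SimpleGraph V) [DecidableRel G.Adj]
    (U : Finset V) : Finset V :=
  Finset.univ.filter fun v =>
    v ∉ U ∧ ∃ u ∈ U, G.Adj v u ∨ ∃ x, G.Adj v x ∧ G.Adj x u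

/-- Lemma 4.2 (packing MaxDGPs): if `o` is a maximum-weight assignment feasible for the
antitone local predicates `P`, then for any `U` and any `g` vanishing on `N²(U)` and on
`rim(U)` and respecting the predicates at `inner(U ∪ N²(U))`, we have
`∑_{v ∈ U} w(v)·o(v) ≥ ∑_{v ∈ inner²(U)} w(v)·g(v)`. -/
theorem stmt4 {V : Type*} [Fintype V] [DecidableEq V] (G : SimpleGraph V)
    [DecidableRel G.Adj] (w : V → ℕ) (k : ℕ) (P : V → (V → ℕ) → Prop)
    (hanti : ∀ v (x x' : V → ℕ),
      (∀ u, (u = v ∨ G.Adj v u) → x' u ≤ x u) → P v x → P v x')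
    (o : V → ℕ) (hok : ∀ v, o v ≤ k) (hfeas : ∀ v, P v o)
    (hopt : ∀ o' : V → ℕ, (∀ v, o' v ≤ k) → (∀ v, P v o') →
      ∑ v, w v * o' v ≤ ∑ v, w v * o v)
    (U : Finset V) (g : V → ℕ) (hgk : ∀ v, g v ≤ k)
    (hgN2 : ∀ v ∈ n2F G U, g v = 0)
    (hgrim : ∀ v ∈ U \ innF G (innF G U), g v = 0)
    (hg : ∀ v ∈ innF G (U ∪ n2F G U), P v g) :
    ∑ v ∈ innF G (innF G U), w v * g v ≤ ∑ v ∈ U, w v * o v := by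
  classical
  set S := innF G (innF G U) with hS
  -- the hybrid solution
  set h : V → ℕ := fun v => if v ∈ S then g v else if v ∈ U then 0 else o v with hh
  have hSU : S ⊆ U := fun v hv => by
    simp only [hS, innF, Finset.mem_filter] at hv
    exact hv.1.1
  have hhk : ∀ v, h v ≤ k := by
    intro v
    simp only [hh]
    split
    · exact hgk v
    split
    · exact Nat.zero_le _
    · exact hok v
  have hhU : ∀ v ∈ U, h v ≤ g v := by
    intro v hv
    simp only [hh]
    split
    · exact le_refl _
    · simp [hv]
  have hhfeas : ∀ v, P v h := by
    intro v
    by_cases hv : v ∈ innF G U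
    · -- closed neighborhood of v is inside U, and h ≤ g there
      simp only [innF, Finset.mem_filter] at hv
      refine hanti v g h ?_ (hg v ?_)
      · intro u hu
        rcases hu with rfl | hadj
        · exact hhU u hv.1
        · exact hhU u (hv.2 u hadj)
      · simp only [innF, Finset.mem_filter]
        refine ⟨Finset.mem_union_left _ hv.1, fun x hx => Finset.mem_union_left _ (hv.2 x hx)⟩
    · -- h ≤ o on the closed neighborhood of v
      refine hanti v o h ?_ (hfeas v)
      intro u hu
      have huS : u ∉ S := by
        intro huS
        have huS' : u ∈ innF G U ∧ ∀ x, G.Adj u x → x ∈ innF G U :=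
          Finset.mem_filter.mp huS
        rcases hu with rfl | hadj
        · exact hv huS'.1
        · exact hv (huS'.2 v hadj.symm)
      simp only [hh, if_neg huS]
      split
      · exact Nat.zero_le _
      · exact le_refl _
  have key := hopt h hhk hhfeas
  have hsplit : ∀ f : V → ℕ,
      ∑ v, w v * f v = ∑ v ∈ U, w v * f v + ∑ v ∈ Finset.univ \ U, w v * f v := by
    intro f
    rw [← Finset.sum_sdiff (Finset.subset_univ U)]
    ring
  rw [hsplit h, hsplit o] at key
  have houtside : ∑ v ∈ Finset.univ \ U, w v * h v = ∑ v ∈ Finset.univ \ U, w v * o v := by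
    refine Finset.sum_congr rfl fun v hv => ?_
    simp only [Finset.mem_sdiff] at hv
    have hvS : v ∉ S := fun hc => hv.2 (hSU hc)
    simp [hh, hvS, hv.2]
  rw [houtside] at key
  have hUh : ∑ v ∈ U, w v * h v = ∑ v ∈ S, w v * g v := by
    rw [← Finset.sum_sdiff hSU]
    have h1 : ∑ v ∈ U \ S, w v * h v = 0 := by
      refine Finset.sum_eq_zero fun v hv => ?_
      simp only [Finset.mem_sdiff] at hv
      simp [hh, hv.2, hv.1]
    have h2 : ∑ v ∈ S, w v * h v = ∑ v ∈ S, w v * g v := by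
      refine Finset.sum_congr rfl fun v hv => ?_
      simp [hh, hv]
    rw [h1, h2]
    ring
  rw [hUh] at key
  omega
end

section
/- Let V be a finite set partitioned into sets V₁,…,V_k with associated sets Sⱼ satisfying ⋃ⱼ rim(Vⱼ) ⊆ ⋃ⱼ Sⱼ, where rim(Vⱼ) = Vⱼ \ inner²(Vⱼ). Let Tⱼ = inner²(Vⱼ) ∪ Sⱼ and let w : V → ℝ≥0, o, o* : V → ℝ≥0, and values Wⱼ ≥ 0 with: (bound) ∑_{v∈Tⱼ} w(v)o*(v) ≤ Wⱼ for all j; (optimality) Wⱼ ≤ α·∑_{v∈Tⱼ} w(v)gⱼ(v) for some gⱼ; (growth) ∑_{v∈Tⱼ} w(v)gⱼ(v) ≤ (1+ε)·∑_{v∈Vⱼ} w(v)o(v) for all j. Then ∑_{v∈V} w(v)o*(v) ≤ α(1+ε)·∑_{v∈V} w(v)o(v). -/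
lemma sum_biUnion_le' {ι V : Type*} [DecidableEq ι] [DecidableEq V] (s : Finset ι) (t : ι → Finset V)
    (f : V → ℝ) (hf : ∀ v, 0 ≤ f v) :
    ∑ v ∈ s.biUnion t, f v ≤ ∑ j ∈ s, ∑ v ∈ t j, f v := by
  induction s using Finset.induction with
  | empty => simp
  | insert a s hx ih =>
    rw [Finset.biUnion_insert, Finset.sum_insert hx]
    calc ∑ v ∈ t a ∪ s.biUnion t, f v ≤ ∑ v ∈ t a, f v + ∑ v ∈ s.biUnion t, f v := by
          have := Finset.sum_union_inter (s₁ := t a) (s₂ := s.biUnion t) (f := f)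
          have h2 : 0 ≤ ∑ v ∈ t a ∩ s.biUnion t, f v := Finset.sum_nonneg fun v _ => hf v
          linarith
      _ ≤ _ := by linarith [ih]

/-- Soundness of the compiler for canonical MaxDGPs (Section 4.5.2): with
`T j = I j ∪ S j` (inner² plus secondary sets), the bound, optimality, and growth
properties imply `f(o*) ≤ α(1+ε)·f(o)`. -/
theorem stmt7 {V : Type*} [Fintype V] [DecidableEq V] {k : ℕ}
    (Vc I S : Fin k → Finset V)
    (hI : ∀ j, I j ⊆ Vc j)
    (hdisj : ∀ i j, i ≠ j → Disjoint (Vc i) (Vc j))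
    (hcover : Finset.univ.biUnion Vc = Finset.univ)
    (hrim : Finset.univ.biUnion (fun j => Vc j \ I j) ⊆ Finset.univ.biUnion S)
    (w o o' : V → ℝ) (g : Fin k → V → ℝ) (W : Fin k → ℝ)
    (hw : ∀ v, 0 ≤ w v) (ho : ∀ v, 0 ≤ o v) (ho' : ∀ v, 0 ≤ o' v)
    (hgpos : ∀ j v, 0 ≤ g j v)
    (ε α : ℝ) (hε : 0 < ε) (hα : 1 ≤ α)
    (hbound : ∀ j, ∑ v ∈ I j ∪ S j, w v * o' v ≤ W j)
    (hopt : ∀ j, W j ≤ α * ∑ v ∈ I j ∪ S j, w v * g j v)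
    (hgrow : ∀ j, ∑ v ∈ I j ∪ S j, w v * g j v ≤ (1 + ε) * ∑ v ∈ Vc j, w v * o v) :
    ∑ v, w v * o' v ≤ α * (1 + ε) * ∑ v, w v * o v := by
  have hf' : ∀ v, 0 ≤ w v * o' v := fun v => mul_nonneg (hw v) (ho' v)
  -- univ is covered by the T j = I j ∪ S j
  have hcov : (Finset.univ : Finset V) ⊆ Finset.univ.biUnion (fun j => I j ∪ S j) := by
    intro v _
    have hv : v ∈ Finset.univ.biUnion Vc := by rw [hcover]; exact Finset.mem_univ v
    obtain ⟨j, -, hvj⟩ := Finset.mem_biUnion.mp hv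
    by_cases hvI : v ∈ I j
    · exact Finset.mem_biUnion.mpr ⟨j, Finset.mem_univ j, Finset.mem_union_left _ hvI⟩
    · have : v ∈ Finset.univ.biUnion S := hrim (Finset.mem_biUnion.mpr
        ⟨j, Finset.mem_univ j, Finset.mem_sdiff.mpr ⟨hvj, hvI⟩⟩)
      obtain ⟨j', -, hvj'⟩ := Finset.mem_biUnion.mp this
      exact Finset.mem_biUnion.mpr ⟨j', Finset.mem_univ j', Finset.mem_union_right _ hvj'⟩
  have h1 : ∑ v, w v * o' v ≤ ∑ j : Fin k, ∑ v ∈ I j ∪ S j, w v * o' v := by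
    calc ∑ v, w v * o' v
        ≤ ∑ v ∈ Finset.univ.biUnion (fun j => I j ∪ S j), w v * o' v :=
          Finset.sum_le_sum_of_subset_of_nonneg hcov (fun v _ _ => hf' v)
      _ ≤ _ := sum_biUnion_le' _ _ _ hf'
  have h2 : ∑ j : Fin k, ∑ v ∈ I j ∪ S j, w v * o' v ≤
      ∑ j : Fin k, α * (1 + ε) * ∑ v ∈ Vc j, w v * o v := by
    refine Finset.sum_le_sum fun j _ => ?_
    calc ∑ v ∈ I j ∪ S j, w v * o' v ≤ W j := hbound j
      _ ≤ α * ∑ v ∈ I j ∪ S j, w v * g j v := hopt j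
      _ ≤ α * ((1 + ε) * ∑ v ∈ Vc j, w v * o v) := by
          apply mul_le_mul_of_nonneg_left (hgrow j) (le_trans zero_le_one hα)
      _ = α * (1 + ε) * ∑ v ∈ Vc j, w v * o v := by ring
  have h3 : ∑ j : Fin k, ∑ v ∈ Vc j, w v * o v = ∑ v, w v * o v := by
    rw [← hcover, Finset.sum_biUnion]
    intro i hi j hj hij
    exact hdisj i j hij
  calc ∑ v, w v * o' v ≤ ∑ j : Fin k, α * (1 + ε) * ∑ v ∈ Vc j, w v * o v := h1.trans h2
    _ = α * (1 + ε) * ∑ v, w v * o v := by rw [← Finset.mul_sum, h3]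
end

section
/- In any finite graph G with maximum degree Δ ≥ 1, for every maximal independent set M and every independent set I, |I| ≤ Δ·|M|. -/
/-- `s` is an independent set of `G`: pairwise non-adjacent vertices. -/
def IsIndep {V : Type*} (G : SimpleGraph V) (s : Set V) : Prop :=
  s.Pairwise fun a b => ¬ G.Adj a b

/-- In a finite graph of maximum degree `Δ ≥ 1`, every independent set `I` satisfies
`|I| ≤ Δ·|M|` for every maximal independent set `M`. -/
theorem stmt12 {V : Type*} [Fintype V] [DecidableEq V] (G : SimpleGraph V)
    [DecidableRel G.Adj] (hΔ : 1 ≤ G.maxDegree)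
    (M : Finset V) (hM : IsIndep G ↑M)
    (hMmax : ∀ v ∉ M, ¬ IsIndep G (insert v ↑M : Set V))
    (I : Finset V) (hI : IsIndep G ↑I) :
    I.card ≤ G.maxDegree * M.card := by
  classical
  have key : ∀ v, v ∉ M → ∃ m ∈ M, G.Adj v m := by
    intro v hv
    by_contra h
    push_neg at h
    apply hMmax v hv
    unfold IsIndep
    have hsym : Symmetric (fun a b => ¬ G.Adj a b) := fun a b hn hab => hn hab.symm
    haveI : Std.Symm (fun a b => ¬ G.Adj a b) := ⟨hsym⟩
    rw [Set.pairwise_insert_of_symmetric]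
    exact ⟨hM, fun m hm _ hadj => h m hm hadj⟩
  set f : V → V := fun v => if h : ∃ m ∈ M, G.Adj v m then h.choose else v with hf
  have hfadj : ∀ v, f v ≠ v → G.Adj v (f v) ∧ f v ∈ M := by
    intro v hv
    simp only [hf] at hv ⊢
    split at hv
    · rename_i h
      split
      · exact ⟨h.choose_spec.2, h.choose_spec.1⟩
      · exact absurd h (by assumption)
    · exact absurd rfl hv
  have hdom : ∀ v ∈ I, f v ∈ M := by
    intro v _
    by_cases hv : f v = v
    · rw [hv]
      by_contra hvM
      obtain ⟨m, hm, hadj⟩ := key v hvM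
      simp only [hf] at hv
      rw [dif_pos ⟨m, hm, hadj⟩] at hv
      have := (⟨m, hm, hadj⟩ : ∃ m ∈ M, G.Adj v m).choose_spec
      rw [hv] at this
      exact G.loopless.irrefl v this.2
    · exact (hfadj v hv).2
  rw [Finset.card_eq_sum_card_fiberwise hdom]
  have hbound : ∀ m ∈ M, (I.filter (fun v => f v = m)).card ≤ G.maxDegree := by
    intro m hm
    by_cases hmem : m ∈ I.filter (fun v => f v = m)
    · have : I.filter (fun v => f v = m) = {m} := by
        apply Finset.eq_singleton_iff_unique_mem.mpr
        refine ⟨hmem, fun v hv => ?_⟩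
        by_contra hvm
        rw [Finset.mem_filter] at hv hmem
        have hfv : f v ≠ v := fun h => hvm (h ▸ hv.2)
        have hadj : G.Adj v m := hv.2 ▸ (hfadj v hfv).1
        exact hI hv.1 hmem.1 hvm hadj
      rw [this, Finset.card_singleton]
      exact hΔ
    · have hsub : I.filter (fun v => f v = m) ⊆ G.neighborFinset m := by
        intro v hv
        have hvm : v ≠ m := fun h => hmem (h ▸ hv)
        rw [Finset.mem_filter] at hv
        have hfv : f v ≠ v := fun h => hvm (h.symm.trans hv.2)
        have hadj : G.Adj v m := hv.2 ▸ (hfadj v hfv).1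
        rw [SimpleGraph.mem_neighborFinset]
        exact hadj.symm
      calc (I.filter (fun v => f v = m)).card ≤ (G.neighborFinset m).card :=
            Finset.card_le_card hsub
        _ = G.degree m := (G.card_neighborFinset_eq_degree m)
        _ ≤ G.maxDegree := G.degree_le_maxDegree m
  calc (∑ m ∈ M, (I.filter (fun v => f v = m)).card) ≤ M.card * G.maxDegree :=
        Finset.sum_le_card_nsmul M _ _ hbound
    _ = G.maxDegree * M.card := Nat.mul_comm _ _
end
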